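/- arXiv:2202.13598 — 3 statements merged into one kernel-verified Lean document; each statement's English description precedes it below -/
import Mathlib

section
/- Let h : ℝ → ℝ be twice continuously differentiable and γ > 0. Suppose h(0) ≥ 0, ḣ(0) + γ h(0) ≥ 0, and ḧ(t) + 2γ ḣ(t) + γ² h(t) ≥ 0 for all t ≥ 0. Then h(t) ≥ 0 for all t ≥ 0. -/
lemma ecbf_aux (f f' : ℝ → ℝ) (γ : ℝ)
    (hderiv : ∀ t, HasDerivAt f (f' t) t)
    (h0 : 0 ≤ f 0) (hcond : ∀ t ≥ 0, 0 ≤ f' t + γ * f t) :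
    ∀ t ≥ 0, 0 ≤ f t := by
  set F : ℝ → ℝ := fun t => Real.exp (γ * t) * f t with hF
  have hFd : ∀ t, HasDerivAt F (Real.exp (γ * t) * (f' t + γ * f t)) t := by
    intro t
    have h1 : HasDerivAt (fun t => Real.exp (γ * t)) (γ * Real.exp (γ * t)) t := by
      simpa [mul_comm, Function.comp_def] using (Real.hasDerivAt_exp (γ * t)).comp t
        ((hasDerivAt_id t).const_mul γ)
    have := h1.mul (hderiv t)
    exact this.congr_deriv (by ring)
  have hmono : MonotoneOn F (Set.Ici (0 : ℝ)) := by
    apply monotoneOn_of_deriv_nonneg (convex_Ici 0)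
      (fun t _ => (hFd t).differentiableAt.continuousAt.continuousWithinAt)
    · intro t ht
      exact (hFd t).differentiableAt.differentiableWithinAt
    · intro t ht
      rw [interior_Ici] at ht
      rw [(hFd t).deriv]
      exact mul_nonneg (Real.exp_nonneg _) (hcond t (le_of_lt ht))
  intro t ht
  have : F 0 ≤ F t := hmono (Set.self_mem_Ici) ht ht
  have hF0 : F 0 = f 0 := by simp [hF]
  have : (0 : ℝ) ≤ F t := le_trans (hF0 ▸ h0) this
  have hpos : 0 < Real.exp (γ * t) := Real.exp_pos _
  simp only [hF] at this
  nlinarith [this]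

theorem ecbf_degree_two (h h' h'' : ℝ → ℝ) (γ : ℝ) (hγ : 0 < γ)
    (hderiv : ∀ t, HasDerivAt h (h' t) t)
    (hderiv' : ∀ t, HasDerivAt h' (h'' t) t) (hcont : Continuous h'')
    (h0 : 0 ≤ h 0) (hd0 : 0 ≤ h' 0 + γ * h 0)
    (hcond : ∀ t ≥ 0, h'' t + 2 * γ * h' t + γ ^ 2 * h t ≥ 0) :
    ∀ t ≥ 0, h t ≥ 0 := by
  have hg : ∀ t ≥ 0, 0 ≤ (h' t + γ * h t) := by
    apply ecbf_aux (fun t => h' t + γ * h t) (fun t => h'' t + γ * h' t) γ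
    · intro t
      exact (hderiv' t).add ((hderiv t).const_mul γ)
    · exact hd0
    · intro t ht
      have := hcond t ht
      nlinarith
  intro t ht
  have := ecbf_aux h h' γ hderiv h0 (fun t ht => by linarith [hg t ht]) t ht
  linarith
end

section
/- Let v : ℝ → ℝ be continuously differentiable with v' = u - κ v, where κ ≥ κ_low > 0, and let h(t) = V² - v(t)². Suppose |v(0)| ≤ V and for all t ≥ 0 the control satisfies 2 v(t) u(t) ≤ 2 κ_low v(t)² + γ (V² - v(t)²) with γ > 0. Then |v(t)| ≤ V for all t ≥ 0. -/
theorem velocity_saturation_certificate (v u : ℝ → ℝ) (κ κ_low V γ : ℝ)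
    (hlow : 0 < κ_low) (hκ : κ_low ≤ κ) (hγ : 0 < γ)
    (hu : Continuous u)
    (hode : ∀ t, HasDerivAt v (u t - κ * v t) t)
    (hv0 : |v 0| ≤ V)
    (hcond : ∀ t ≥ 0, 2 * v t * u t ≤ 2 * κ_low * (v t) ^ 2 + γ * (V ^ 2 - (v t) ^ 2)) :
    ∀ t ≥ 0, |v t| ≤ V := by
  set g : ℝ → ℝ := fun t => (V ^ 2 - v t ^ 2) * Real.exp (γ * t) with hg
  have hderiv : ∀ t, HasDerivAt g
      (-(2 * v t * (u t - κ * v t)) * Real.exp (γ * t)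
        + (V ^ 2 - v t ^ 2) * (γ * Real.exp (γ * t))) t := by
    intro t
    have h1 : HasDerivAt (fun t => V ^ 2 - v t ^ 2)
        (-(2 * v t * (u t - κ * v t))) t := by
      have := ((hode t).pow 2).const_sub (V ^ 2)
      simpa [mul_comm, mul_assoc, mul_left_comm] using this
    have h2 : HasDerivAt (fun t => Real.exp (γ * t)) (γ * Real.exp (γ * t)) t := by
      have := (Real.hasDerivAt_exp (γ * t)).comp t ((hasDerivAt_id t).const_mul γ)
      simpa [mul_comm, Function.comp_def] using this
    exact h1.mul h2
  have hmono : MonotoneOn g (Set.Ici 0) := by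
    have hvc : Continuous v := by
      apply continuous_iff_continuousAt.mpr
      intro t
      exact (hode t).continuousAt
    have hgc : Continuous g := by
      apply Continuous.mul (continuous_const.sub (hvc.pow 2))
      exact Real.continuous_exp.comp (continuous_const.mul continuous_id)
    apply monotoneOn_of_deriv_nonneg (convex_Ici 0) hgc.continuousOn
    · intro t ht
      exact (hderiv t).differentiableAt.differentiableWithinAt
    · intro t ht
      rw [(hderiv t).deriv]
      rw [interior_Ici] at ht
      have ht' : (0:ℝ) ≤ t := le_of_lt ht
      have hc := hcond t ht'
      have hexp : 0 < Real.exp (γ * t) := Real.exp_pos _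
      nlinarith [sq_nonneg (v t), mul_le_mul_of_nonneg_right hc hexp.le,
        mul_nonneg (mul_nonneg (sub_nonneg.mpr hκ) (sq_nonneg (v t))) hexp.le]
  intro t ht
  have h0 : g 0 ≤ g t := hmono (Set.self_mem_Ici) ht ht
  have hg0 : 0 ≤ g 0 := by
    have : v 0 ^ 2 ≤ V ^ 2 := by
      have := abs_le.mp hv0
      nlinarith
    simp [hg]
    nlinarith [Real.exp_pos (γ * 0)]
  have hVnn : 0 ≤ V := le_trans (abs_nonneg _) hv0
  have hsq : v t ^ 2 ≤ V ^ 2 := by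
    have hgt : 0 ≤ g t := le_trans hg0 h0
    simp only [hg] at hgt
    have hexp : 0 < Real.exp (γ * t) := Real.exp_pos _
    nlinarith
  rw [abs_le]
  constructor <;> nlinarith
end

section
/- Let p, v : ℝ → ℝ satisfy ṗ = v, v̇ = u - κ v with 0 < κ ≤ κ_up, and define h(t) = (L̄ - r)² - (p(t) - L̄)² with 0 < r < L̄. Suppose h(0) ≥ 0, ḣ(0) + γ h(0) ≥ 0 for some γ > 0, and for all t ≥ 0 the control satisfies 2(p - L̄)u ≤ -2κ_up|(p - L̄)v| - 2v² + γ² h + 2γ ḣ, where ḣ = -2(p - L̄)v. Then h(t) ≥ 0 for all t ≥ 0, i.e., r ≤ p(t) ≤ 2L̄ - r for all t ≥ 0. -/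
/-- Grönwall-type lemma: if f(0) ≥ 0 and f' + γ f ≥ 0 on [0,∞), then f ≥ 0 on [0,∞). -/
lemma nonneg_of_deriv_ineq (f f' : ℝ → ℝ) (γ : ℝ)
    (hf : ∀ t, HasDerivAt f (f' t) t)
    (h0 : 0 ≤ f 0)
    (hineq : ∀ t ≥ 0, 0 ≤ f' t + γ * f t) :
    ∀ t ≥ 0, 0 ≤ f t := by
  set g : ℝ → ℝ := fun t => Real.exp (γ * t) * f t with hg
  have hg' : ∀ t, HasDerivAt g (Real.exp (γ * t) * (γ * f t + f' t)) t := by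
    intro t
    have he : HasDerivAt (fun t => Real.exp (γ * t)) (Real.exp (γ * t) * γ) t := by
      have := (Real.hasDerivAt_exp (γ * t)).comp t ((hasDerivAt_id t).const_mul γ)
      exact this.congr_deriv (by ring)
    have := he.mul (hf t)
    exact this.congr_deriv (by ring)
  have hmono : MonotoneOn g (Set.Ici (0 : ℝ)) := by
    apply monotoneOn_of_deriv_nonneg (convex_Ici 0)
    · exact (Continuous.continuousOn (by
        continuity) : ContinuousOn (fun t => Real.exp (γ * t)) _) |>.mul
        (fun t _ => (hf t).continuousAt.continuousWithinAt)
    · intro t _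
      exact ((hg' t).differentiableAt).differentiableWithinAt
    · intro t ht
      rw [(hg' t).deriv]
      have ht' : (0 : ℝ) ≤ t := le_of_lt (by simpa using ht)
      have h2 : 0 ≤ γ * f t + f' t := by linarith [hineq t ht']
      positivity
  intro t ht
  have := hmono (Set.self_mem_Ici) (Set.mem_Ici.mpr ht) ht
  have h0' : g 0 = f 0 := by simp [hg]
  have hgt : 0 ≤ Real.exp (γ * t) * f t := by rw [h0'] at this; exact le_trans h0 this
  have hexp : 0 < Real.exp (γ * t) := Real.exp_pos _
  exact nonneg_of_mul_nonneg_left (by linarith [mul_comm (Real.exp (γ * t)) (f t)] : 0 ≤ f t * Real.exp (γ * t)) hexp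

theorem playground_certificate (p v u : ℝ → ℝ) (κ κ_up L r γ : ℝ)
    (hκ : 0 < κ) (hup : κ ≤ κ_up) (hr : 0 < r) (hrL : r < L) (hγ : 0 < γ)
    (hu : Continuous u)
    (hp : ∀ t, HasDerivAt p (v t) t)
    (hv : ∀ t, HasDerivAt v (u t - κ * v t) t)
    (h0 : 0 ≤ (L - r) ^ 2 - (p 0 - L) ^ 2)
    (hd0 : 0 ≤ -2 * (p 0 - L) * v 0 + γ * ((L - r) ^ 2 - (p 0 - L) ^ 2))
    (hcond : ∀ t ≥ 0,
      2 * (p t - L) * u t ≤ -2 * κ_up * |(p t - L) * v t| - 2 * (v t) ^ 2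
        + γ ^ 2 * ((L - r) ^ 2 - (p t - L) ^ 2) + 2 * γ * (-2 * (p t - L) * v t)) :
    ∀ t ≥ 0, 0 ≤ (L - r) ^ 2 - (p t - L) ^ 2 ∧ r ≤ p t ∧ p t ≤ 2 * L - r := by
  set h : ℝ → ℝ := fun t => (L - r) ^ 2 - (p t - L) ^ 2 with hh
  set h' : ℝ → ℝ := fun t => -2 * (p t - L) * v t with hh'
  have hhd : ∀ t, HasDerivAt h (h' t) t := by
    intro t
    have := (((hp t).sub_const L).pow 2).const_sub ((L - r) ^ 2)
    exact this.congr_deriv (by simp only [hh']; ring)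
  set ψ : ℝ → ℝ := fun t => h' t + γ * h t with hψ
  set ψ' : ℝ → ℝ := fun t =>
    (-2 * (v t * v t + (p t - L) * (u t - κ * v t))) + γ * h' t with hψ'
  have hψd : ∀ t, HasDerivAt ψ (ψ' t) t := by
    intro t
    have h1 : HasDerivAt h' (-2 * (v t * v t + (p t - L) * (u t - κ * v t))) t := by
      have := (((hp t).sub_const L).const_mul (-2)).mul (hv t)
      exact this.congr_deriv (by ring)
    have := h1.add ((hhd t).const_mul γ)
    exact this
  -- ψ ≥ 0 on [0,∞)
  have hψ0 : ∀ t ≥ 0, 0 ≤ ψ t := by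
    apply nonneg_of_deriv_ineq ψ ψ' γ hψd
    · simpa [hψ, hh', hh] using hd0
    · intro t ht
      have hc := hcond t ht
      have ha1 : (p t - L) * v t ≤ |(p t - L) * v t| := le_abs_self _
      have ha2 : -((p t - L) * v t) ≤ |(p t - L) * v t| := neg_le_abs _
      simp only [hψ', hψ, hh', hh]
      nlinarith [abs_nonneg ((p t - L) * v t), sq_nonneg (v t)]
  have hh0 : ∀ t ≥ 0, 0 ≤ h t := by
    apply nonneg_of_deriv_ineq h h' γ hhd
    · simpa [hh] using h0
    · intro t ht
      exact hψ0 t ht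
  intro t ht
  have h1 : 0 ≤ (L - r) ^ 2 - (p t - L) ^ 2 := hh0 t ht
  refine ⟨h1, ?_, ?_⟩
  · nlinarith [h1, sq_nonneg (p t - r), sq_nonneg (p t + r - 2 * L)]
  · nlinarith [h1, sq_nonneg (p t - r), sq_nonneg (p t + r - 2 * L)]
end
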